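/- Proximity formula for multiplicities: let W be an RVT code word padded with infinitely many trailing R's, and let m_j denote the leading entry of PC(L^j(W)). Define p_j proximate to p_i if j = i+1, or if the symbols of W in positions i+2 through j (1-indexed after the base point) form a block V T^{j−i−2} (i.e. position i+2 carries V and positions i+3,…,j carry T). Then for every i ≥ 0, m_i = Σ m_j over all j proximate to i (the sum being finite since m_j = 1 eventually and each i has finitely many proximate j). -/

import Mathlib

/-- The three symbols of an RVT code word. -/
inductive RVT : Type
  | R | V | T
deriving DecidableEq, Repr

/-- Replace a leading run of `T`'s by `R`'s. -/
def deT : List RVT → List RVT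
  | RVT.T :: xs => RVT.R :: deT xs
  | xs => xs

/-- If the word begins with `V`, replace that `V` and the immediately
following `T`'s by `R`'s. -/
def reg : List RVT → List RVT
  | RVT.V :: xs => RVT.R :: deT xs
  | xs => xs

/-- The lifted word `L(W)`: remove the first symbol (an `R`), then replace a
leading maximal critical block `V Tᵗ` by `R^(t+1)`. -/
def lift (w : List RVT) : List RVT := reg w.tail

/-- Length of the leading run of `T`'s. -/
def countT : List RVT → ℕ
  | RVT.T :: xs => countT xs + 1
  | _ => 0

/-- Fueled version of the front-end recursion for the Puiseux characteristic
(Theorem PCfront): base case `[1]` on all-`R` words; given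
`PC(L(W)) = [l0; l1, ..., lg]`,
(A) if `W` begins `RR` then `PC(W) = [l0; l1+l0, ..., lg+l0]`;
(B) if `W` begins `R V T^t R` or `W = R V T^t` then
`PC(W) = [(t+2)l0; (t+3)l0, l1+l0, ..., lg+l0]`;
(C) if `W` begins `R V T^t V` then `PC(W) = [l1; l1+l0, ..., lg+l0]`. -/
def PCf : ℕ → List RVT → List ℕ
  | 0, _ => [1]
  | _ + 1, [] => [1]
  | fuel + 1, w@(_ :: rest) =>
    if w.all (· = RVT.R) then [1]
    else
      let p := PCf fuel (lift w)
      let l0 := p.headD 1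
      let tl := p.tail
      match rest with
      | RVT.V :: xs =>
        match xs.drop (countT xs) with
        | RVT.V :: _ => tl.headD 1 :: tl.map (· + l0)                                -- case (C)
        | _ => ((countT xs + 2) * l0) :: ((countT xs + 3) * l0) :: tl.map (· + l0)   -- case (B)
      | _ => l0 :: tl.map (· + l0)                                                   -- case (A)

/-- The Puiseux characteristic `PC(W)` computed by the front-end recursion. -/
def PC (w : List RVT) : List ℕ := PCf w.length w

/-- A valid RVT code word: begins with `R`, and `T` occurs only immediately
after a `V` or a `T`. -/
def ValidRVT (w : List RVT) : Prop :=
  w.head? = some RVT.R ∧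
  ∀ i, w[i + 1]? = some RVT.T → (w[i]? = some RVT.V ∨ w[i]? = some RVT.T)

/-- The function `E` on strings, with `E_T[a;b] = [a;a+b]`, `E_V[a;b] = [b;a+b]`,
`E_R = E_T`, and base value `E(empty) = [1;2]`; the leftmost symbol acts last. -/
def Efun : List RVT → ℕ × ℕ
  | [] => (1, 2)
  | RVT.V :: q => ((Efun q).2, (Efun q).1 + (Efun q).2)
  | _ :: q => ((Efun q).1, (Efun q).1 + (Efun q).2)

/-- The Euclidean-type recursion: `Euc(1,2)` is the empty word; for coprime
`a < b`, if `b < 2a` then `Euc(a,b) = V · Euc(b-a,a)`, and if `b > 2a` then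
`Euc(a,b) = T · Euc(a,b-a)`. -/
def Euc (a b : ℕ) : List RVT :=
  if a = 1 ∧ b = 2 then []
  else if _h1 : 0 < a ∧ a < b ∧ b < 2 * a then RVT.V :: Euc (b - a) a
  else if _h2 : 0 < a ∧ a < b ∧ 2 * a < b then RVT.T :: Euc a (b - a)
  else []
termination_by a + b
decreasing_by all_goals omega

-- aux
lemma deT_length (l : List RVT) : (deT l).length = l.length := by
  induction l with
  | nil => rfl
  | cons x xs ih => cases x <;> simp [deT, ih]

lemma reg_length (l : List RVT) : (reg l).length = l.length := by
  cases l with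
  | nil => rfl
  | cons x xs => cases x <;> simp [reg, deT_length]

lemma reg_of_head_ne (l : List RVT) (h : l.head? ≠ some RVT.V) : reg l = l := by
  cases l with
  | nil => rfl
  | cons x xs => cases x <;> simp_all [reg]

lemma lift_cons (x : RVT) (rest : List RVT) : lift (x :: rest) = reg rest := rfl

lemma countT_le (l : List RVT) : countT l ≤ l.length := by
  induction l with
  | nil => simp [countT]
  | cons x xs ih => cases x <;> simp [countT] <;> omega

lemma deT_eq (l : List RVT) :
    deT l = List.replicate (countT l) RVT.R ++ l.drop (countT l) := by
  induction l with
  | nil => rfl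
  | cons x xs ih => cases x <;> simp [deT, countT, List.replicate_succ, ih]

lemma countT_getD_lt (l : List RVT) {k : ℕ} (h : k < countT l) :
    l.getD k RVT.R = RVT.T := by
  induction l generalizing k with
  | nil => simp [countT] at h
  | cons x xs ih =>
    cases x <;> simp [countT] at h
    cases k with
    | zero => rfl
    | succ k => exact ih (by omega)

lemma getD_countT (l : List RVT) : l.getD (countT l) RVT.R ≠ RVT.T := by
  induction l with
  | nil => simp [countT, List.getD]
  | cons x xs ih =>
    cases x <;> simp [countT, List.getD] <;> try simp_all [List.getD]

lemma PCf_allR (f : ℕ) (l : List RVT) (h : l.all (· = RVT.R)) : PCf f l = [1] := by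
  cases f with
  | zero => rfl
  | succ f =>
    cases l with
    | nil => rfl
    | cons x xs => simp only [PCf, h, if_true]

lemma PC_nil : PC ([] : List RVT) = [1] := rfl

lemma lift_nil : lift ([] : List RVT) = [] := rfl

lemma PC_eq_A (x : RVT) (rest : List RVT) (hne : rest.head? ≠ some RVT.V)
    (hall : (x :: rest).all (· = RVT.R) = false) :
    PC (x :: rest) =
      (PC (lift (x :: rest))).headD 1 ::
        (PC (lift (x :: rest))).tail.map (· + (PC (lift (x :: rest))).headD 1) := by
  show PCf (rest.length + 1) (x :: rest) = _
  rw [PCf]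
  simp only [hall, Bool.false_eq_true, if_false]
  have hl : (lift (x :: rest)).length = rest.length := by
    rw [lift_cons, reg_length]
  have hp : PCf rest.length (lift (x :: rest)) = PC (lift (x :: rest)) := by
    rw [PC, hl]
  cases rest with
  | nil => simp only [List.length_nil] at hp; simp [hp]
  | cons y xs =>
    simp only [List.length_cons] at hp
    cases y with
    | V => simp at hne
    | R => simp [hp]
    | T => simp [hp]

lemma PC_eq_B (x : RVT) (xs : List RVT)
    (hne : (xs.drop (countT xs)).head? ≠ some RVT.V) :
    PC (x :: RVT.V :: xs) =
      ((countT xs + 2) * (PC (lift (x :: RVT.V :: xs))).headD 1) ::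
      ((countT xs + 3) * (PC (lift (x :: RVT.V :: xs))).headD 1) ::
        (PC (lift (x :: RVT.V :: xs))).tail.map
          (· + (PC (lift (x :: RVT.V :: xs))).headD 1) := by
  have hall : ((x :: RVT.V :: xs).all (· = RVT.R)) = false := by simp
  show PCf ((RVT.V :: xs).length + 1) (x :: RVT.V :: xs) = _
  rw [PCf]
  simp only [hall, Bool.false_eq_true, if_false]
  have hl : (lift (x :: RVT.V :: xs)).length = (RVT.V :: xs).length := by
    rw [lift_cons, reg_length]
  have hp : PCf (RVT.V :: xs).length (lift (x :: RVT.V :: xs)) = PC (lift (x :: RVT.V :: xs)) := by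
    rw [PC, hl]
  simp only [List.length_cons] at hp
  cases hdrop : xs.drop (countT xs) with
  | nil => simp [hdrop, hp]
  | cons z zs =>
    cases z with
    | V => rw [hdrop] at hne; simp at hne
    | R => simp [hdrop, hp]
    | T => simp [hdrop, hp]

lemma PC_eq_C (x : RVT) (xs zs : List RVT)
    (hd : xs.drop (countT xs) = RVT.V :: zs) :
    PC (x :: RVT.V :: xs) =
      (PC (lift (x :: RVT.V :: xs))).tail.headD 1 ::
        (PC (lift (x :: RVT.V :: xs))).tail.map
          (· + (PC (lift (x :: RVT.V :: xs))).headD 1) := by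
  have hall : ((x :: RVT.V :: xs).all (· = RVT.R)) = false := by simp
  show PCf ((RVT.V :: xs).length + 1) (x :: RVT.V :: xs) = _
  rw [PCf]
  simp only [hall, Bool.false_eq_true, if_false]
  have hl : (lift (x :: RVT.V :: xs)).length = (RVT.V :: xs).length := by
    rw [lift_cons, reg_length]
  have hp : PCf (RVT.V :: xs).length (lift (x :: RVT.V :: xs)) = PC (lift (x :: RVT.V :: xs)) := by
    rw [PC, hl]
  simp only [List.length_cons] at hp
  simp [hd, hp]

def Hd (w : List RVT) : ℕ := (PC w).headD 1
def S2 (w : List RVT) : ℕ := (PC w).tail.headD 1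

lemma PCf_ne_nil (f : ℕ) (l : List RVT) : PCf f l ≠ [] := by
  cases f with
  | zero => simp [PCf]
  | succ f =>
    cases l with
    | nil => simp [PCf]
    | cons x rest =>
      rw [PCf]
      split
      · simp
      · cases rest with
        | nil => simp
        | cons y xs =>
          cases y with
          | V =>
            cases hdrop : xs.drop (countT xs) with
            | nil => simp [hdrop]
            | cons z zs => cases z <;> simp [hdrop]
          | R => simp
          | T => simp

lemma PC_ne_nil (l : List RVT) : PC l ≠ [] := PCf_ne_nil _ _

lemma Hd_A (x : RVT) (rest : List RVT) (hne : rest.head? ≠ some RVT.V) :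
    Hd (x :: rest) = Hd (lift (x :: rest)) := by
  by_cases hall : ((x :: rest).all (· = RVT.R)) = true
  · have hrest : rest.all (· = RVT.R) = true := by
      simp only [List.all_cons, Bool.and_eq_true] at hall; exact hall.2
    have h1 : PC (x :: rest) = [1] := PCf_allR _ _ hall
    have h2 : PC (lift (x :: rest)) = [1] := by
      rw [lift_cons, reg_of_head_ne _ hne]; exact PCf_allR _ _ hrest
    rw [Hd, Hd, h1, h2]
  · rw [Hd, Hd, PC_eq_A x rest hne (by simpa using hall)]
    simp

lemma PC_len2_aux : ∀ n (x : RVT) (rest : List RVT), rest.length ≤ n →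
    RVT.V ∈ rest → 2 ≤ (PC (x :: rest)).length := by
  intro n
  induction n with
  | zero =>
    intro x rest h hV
    cases rest with
    | nil => simp at hV
    | cons a b => simp at h
  | succ n ih =>
    intro x rest h hV
    cases rest with
    | nil => simp at hV
    | cons y xs =>
      cases y with
      | V =>
        cases hdrop : xs.drop (countT xs) with
        | nil =>
          rw [PC_eq_B x xs (by rw [hdrop]; simp)]
          simp
        | cons z zs =>
          cases z with
          | V =>
            rw [PC_eq_C x xs zs hdrop]
            have hVin : RVT.V ∈ deT xs := by
              rw [deT_eq]
              refine List.mem_append.2 (Or.inr ?_)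
              rw [hdrop]; exact List.mem_cons_self
            have hlen : (deT xs).length ≤ n := by
              have := deT_length xs
              simp only [List.length_cons] at h
              omega
            have h2 := ih RVT.R (deT xs) hlen hVin
            have : lift (x :: RVT.V :: xs) = RVT.R :: deT xs := rfl
            rw [this]
            simp only [List.length_cons]
            have h3 := PC_ne_nil (RVT.R :: deT xs)
            cases hq : PC (RVT.R :: deT xs) with
            | nil => exact absurd hq h3
            | cons a as => rw [hq] at h2; simp at h2 ⊢; omega
          | R =>
            rw [PC_eq_B x xs (by rw [hdrop]; simp)]
            simp
          | T =>
            rw [PC_eq_B x xs (by rw [hdrop]; simp)]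
            simp
      | R =>
        have hV' : RVT.V ∈ xs := by simpa using hV
        have hall : ((x :: RVT.R :: xs).all (· = RVT.R)) = false := by
          simp only [List.all_eq_false]
          exact ⟨RVT.V, by simp [hV'], by simp⟩
        rw [PC_eq_A x (RVT.R :: xs) (by simp) hall]
        have : lift (x :: RVT.R :: xs) = RVT.R :: xs := rfl
        rw [this]
        have h2 := ih RVT.R xs (by simp at h; omega) hV'
        have h3 := PC_ne_nil (RVT.R :: xs)
        cases hq : PC (RVT.R :: xs) with
        | nil => exact absurd hq h3
        | cons a as => rw [hq] at h2; simp at h2 ⊢; omega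
      | T =>
        have hV' : RVT.V ∈ xs := by simpa using hV
        have hall : ((x :: RVT.T :: xs).all (· = RVT.R)) = false := by
          simp only [List.all_eq_false]
          exact ⟨RVT.V, by simp [hV'], by simp⟩
        rw [PC_eq_A x (RVT.T :: xs) (by simp) hall]
        have : lift (x :: RVT.T :: xs) = RVT.T :: xs := rfl
        rw [this]
        have h2 := ih RVT.T xs (by simp at h; omega) hV'
        have h3 := PC_ne_nil (RVT.T :: xs)
        cases hq : PC (RVT.T :: xs) with
        | nil => exact absurd hq h3
        | cons a as => rw [hq] at h2; simp at h2 ⊢; omega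

lemma PC_len2 (x : RVT) (rest : List RVT) (hV : RVT.V ∈ rest) :
    2 ≤ (PC (x :: rest)).length := PC_len2_aux rest.length x rest le_rfl hV

lemma S2_A (x : RVT) (rest : List RVT) (hne : rest.head? ≠ some RVT.V)
    (h2 : 2 ≤ (PC rest).length) (hall : ((x :: rest).all (· = RVT.R)) = false) :
    S2 (x :: rest) = S2 rest + Hd rest ∧ Hd (x :: rest) = Hd rest := by
  have hlift : lift (x :: rest) = rest := by rw [lift_cons, reg_of_head_ne _ hne]
  have hA := PC_eq_A x rest hne hall
  rw [hlift] at hA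
  cases hq : PC rest with
  | nil => exact absurd hq (PC_ne_nil rest)
  | cons a as =>
    cases as with
    | nil => rw [hq] at h2; simp at h2
    | cons b bs =>
      rw [hq] at hA
      constructor
      · rw [S2, hA, S2, hq]; simp [Hd, hq]
      · rw [Hd, hA, Hd, hq]; simp

lemma KI (x : RVT) (ys : List RVT) :
    S2 (x :: RVT.V :: ys) = Hd (x :: RVT.V :: ys) + Hd (lift (x :: RVT.V :: ys)) := by
  cases hdrop : ys.drop (countT ys) with
  | nil =>
    have hB := PC_eq_B x ys (by rw [hdrop]; simp)
    rw [S2, Hd, hB]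
    simp [Hd]
    ring
  | cons z zs =>
    cases z with
    | V =>
      have hC := PC_eq_C x ys zs hdrop
      have hVin : RVT.V ∈ deT ys := by
        rw [deT_eq]
        refine List.mem_append.2 (Or.inr ?_)
        rw [hdrop]; exact List.mem_cons_self
      have hlift : lift (x :: RVT.V :: ys) = RVT.R :: deT ys := rfl
      have h2 : 2 ≤ (PC (lift (x :: RVT.V :: ys))).length := by
        rw [hlift]; exact PC_len2 _ _ hVin
      rw [S2, Hd, Hd, hC]
      cases hq : PC (lift (x :: RVT.V :: ys)) with
      | nil => exact absurd hq (PC_ne_nil _)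
      | cons a as =>
        cases as with
        | nil => rw [hq] at h2; simp at h2
        | cons b bs => simp
    | R =>
      have hB := PC_eq_B x ys (by rw [hdrop]; simp)
      rw [S2, Hd, hB]
      simp [Hd]
      ring
    | T =>
      have hB := PC_eq_B x ys (by rw [hdrop]; simp)
      rw [S2, Hd, hB]
      simp [Hd]
      ring

lemma getD_drop' (W : List RVT) (m k : ℕ) :
    (W.drop m).getD k RVT.R = W.getD (m + k) RVT.R := by
  simp [List.getD_eq_getElem?_getD, List.getElem?_drop]

lemma reg_drop (W : List RVT) (e : ℕ) (he : W.getD e RVT.R ≠ RVT.T) :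
    ∃ d', e ≤ d' ∧ reg (W.drop e) = List.replicate (d' - e) RVT.R ++ W.drop d' ∧
      W.getD d' RVT.R ≠ RVT.T ∧ (d' = e → W.getD e RVT.R = RVT.R) ∧
      ∀ p, e < p → p < d' → W.getD p RVT.R = RVT.T := by
  by_cases hlen : e < W.length
  · rw [List.drop_eq_getElem_cons hlen]
    have hgetD : W.getD e RVT.R = W[e] := by
      simp [List.getD_eq_getElem?_getD, List.getElem?_eq_getElem hlen]
    cases hWe : W[e] with
    | T => rw [hWe] at hgetD; exact absurd hgetD he
    | R =>
      refine ⟨e, le_rfl, ?_, he, fun _ => by rw [hgetD, hWe], fun p h1 h2 => by omega⟩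
      rw [reg_of_head_ne _ (by simp [hWe])]
      simp [List.drop_eq_getElem_cons hlen, hWe]
    | V =>
      set q := W.drop (e + 1) with hq
      set t := countT q with ht
      refine ⟨e + 1 + t, by omega, ?_, ?_, by omega, ?_⟩
      · show RVT.R :: deT q = _
        rw [deT_eq, ← ht, hq, List.drop_drop]
        have : e + 1 + t - e = t + 1 := by omega
        rw [this, List.replicate_succ]
        simp [Nat.add_comm]
      · rw [show e + 1 + t = (e+1) + t by omega, ← getD_drop', ← hq]
        exact getD_countT q
      · intro p h1 h2
        have : p = (e + 1) + (p - e - 1) := by omega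
        rw [this, ← getD_drop', ← hq]
        exact countT_getD_lt q (by omega)
  · refine ⟨e, le_rfl, ?_, he, fun _ => ?_, fun p h1 h2 => by omega⟩
    · rw [List.drop_eq_nil_of_le (by omega)]
      simp [reg]
    · simp [List.getD_eq_getElem?_getD, List.getElem?_eq_none (by omega : W.length ≤ e)]

def LInv (W : List RVT) (i : ℕ) : Prop :=
  ∃ d, i ≤ d ∧ lift^[i] W = List.replicate (d - i) RVT.R ++ W.drop d ∧
    W.getD d RVT.R ≠ RVT.T ∧ (d = i → W.getD i RVT.R = RVT.R) ∧
    ∀ p, i < p → p < d → W.getD p RVT.R = RVT.T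

lemma Inv_zero (W : List RVT) (hW : ValidRVT W) : LInv W 0 := by
  refine ⟨0, le_rfl, by simp, ?_, fun _ => ?_, fun p h1 h2 => by omega⟩ <;>
  · rcases hW with ⟨h1, -⟩
    cases W with
    | nil => simp [List.getD]
    | cons x xs =>
      simp only [List.head?_cons, Option.some.injEq] at h1
      simp [List.getD, ← h1]
      try simp [h1]

lemma Inv_succ (W : List RVT) (hW : ValidRVT W) (i : ℕ) (h : LInv W i) : LInv W (i + 1) := by
  obtain ⟨d, hid, hrep, hdT, hdi, hblock⟩ := h
  unfold LInv
  rw [Function.iterate_succ_apply']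
  by_cases hc : d - i ≤ 1
  · -- tail (lift^[i] W) = W.drop (i+1)
    have htail : (lift^[i] W).tail = W.drop (i + 1) := by
      rcases Nat.le_one_iff_eq_zero_or_eq_one.mp hc with h0 | h1
      · have hdi' : d = i := by omega
        rw [hrep, hdi']
        simp [List.tail_drop]
      · have hdi' : d = i + 1 := by omega
        rw [hrep, h1, hdi']
        simp
    have hne : W.getD (i + 1) RVT.R ≠ RVT.T := by
      rcases Nat.le_one_iff_eq_zero_or_eq_one.mp hc with h0 | h1
      · -- d = i, need validity
        have hdi' : d = i := by omega
        by_cases hl : i + 1 < W.length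
        · intro hT
          have hT' : W[i+1]? = some RVT.T := by
            rw [List.getD_eq_getElem?_getD, List.getElem?_eq_getElem hl] at hT
            simp only [Option.getD_some] at hT
            rw [List.getElem?_eq_getElem hl, hT]
          have hiR : W.getD i RVT.R = RVT.R := hdi hdi'
          have hil : i < W.length := by omega
          rcases hW.2 i hT' with hv | hv <;>
          · rw [List.getD_eq_getElem?_getD, List.getElem?_eq_getElem hil] at hiR
            rw [List.getElem?_eq_getElem hil] at hv
            simp at hv
            rw [hv] at hiR
            simp at hiR
        · simp [List.getD_eq_getElem?_getD, List.getElem?_eq_none (by omega : W.length ≤ i+1)]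
      · have hdi' : d = i + 1 := by omega
        rw [← hdi']; exact hdT
    rw [lift, htail]
    obtain ⟨d', hd1, hd2, hd3, hd4, hd5⟩ := reg_drop W (i+1) hne
    exact ⟨d', by omega, hd2, hd3, fun hd => hd4 hd, fun p h1 h2 => hd5 p (by omega) h2⟩
  · -- d - i ≥ 2 : the word starts with at least 2 R's
    refine ⟨d, by omega, ?_, hdT, fun hd => by omega, fun p h1 h2 => hblock p (by omega) h2⟩
    rw [lift, hrep]
    have h2 : d - i = (d - i - 1) + 1 := by omega
    rw [h2, List.replicate_succ]
    simp only [List.cons_append, List.tail_cons]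
    rw [reg_of_head_ne]
    · congr 1
    · have h3 : d - i - 1 = (d - i - 2) + 1 := by omega
      rw [h3, List.replicate_succ]
      simp

lemma Inv_all (W : List RVT) (hW : ValidRVT W) (i : ℕ) : LInv W i := by
  induction i with
  | zero => exact Inv_zero W hW
  | succ i ih => exact Inv_succ W hW i ih

lemma Hd_nil_lift : Hd ([] : List RVT) = Hd (lift []) := rfl

lemma step_ne (W : List RVT) (i : ℕ) (inv : LInv W i)
    (h : W.getD (i + 1) RVT.R ≠ RVT.V) :
    Hd (lift^[i] W) = Hd (lift^[i + 1] W) := by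
  rw [Function.iterate_succ_apply']
  obtain ⟨d, hid, hrep, hdT, hdi, hblock⟩ := inv
  by_cases hc : d - i ≤ 1
  · have htail : lift^[i] W = (lift^[i] W).headD RVT.R :: W.drop (i + 1) ∨ lift^[i] W = [] := by
      rcases Nat.le_one_iff_eq_zero_or_eq_one.mp hc with h0 | h1
      · have hdi' : d = i := by omega
        rw [hrep, hdi']
        simp only [Nat.sub_self, List.replicate, List.nil_append]
        by_cases hl : i < W.length
        · left
          rw [List.drop_eq_getElem_cons hl]
          simp [List.head?_drop, List.getElem?_eq_getElem hl]
        · right; exact List.drop_eq_nil_of_le (by omega)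
      · have hdi' : d = i + 1 := by omega
        rw [hrep, h1, hdi']
        left; simp
    rcases htail with heq | heq
    · rw [heq]
      apply Hd_A
      rw [List.head?_drop]
      intro hcon
      apply h
      rw [List.getD_eq_getElem?_getD, hcon]
      rfl
    · rw [heq]; rfl
  · -- starts with ≥ 2 R's
    have h2 : d - i = (d - i - 2) + 2 := by omega
    rw [hrep, h2, List.replicate_succ, List.replicate_succ]
    apply Hd_A
    simp

lemma shape_V (W : List RVT) (i : ℕ) (inv : LInv W i)
    (h : W.getD (i + 1) RVT.R = RVT.V) :
    (∃ x, lift^[i] W = x :: RVT.V :: W.drop (i + 2)) ∧ i + 1 < W.length := by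
  obtain ⟨d, hid, hrep, hdT, hdi, hblock⟩ := inv
  have hl : i + 1 < W.length := by
    by_contra hcon
    rw [List.getD_eq_getElem?_getD, List.getElem?_eq_none (by omega : W.length ≤ i + 1)] at h
    simp at h
  refine ⟨?_, hl⟩
  have hd2 : d ≤ i + 1 := by
    by_contra hcon
    have := hblock (i + 1) (by omega) (by omega)
    rw [h] at this; simp at this
  have hdropV : W.drop (i+1) = RVT.V :: W.drop (i+2) := by
    rw [List.drop_eq_getElem_cons hl]
    rw [List.getD_eq_getElem?_getD, List.getElem?_eq_getElem hl] at h
    simp only [Option.getD_some] at h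
    rw [h]
  rcases Nat.lt_or_ge d (i+1) with hlt | hge
  · have hdi' : d = i := by omega
    have hil : i < W.length := by omega
    refine ⟨W[i], ?_⟩
    rw [hrep, hdi']
    simp only [Nat.sub_self, List.replicate, List.nil_append]
    rw [List.drop_eq_getElem_cons hil, hdropV]
  · have hdi' : d = i + 1 := by omega
    refine ⟨RVT.R, ?_⟩
    rw [hrep, hdi']
    simp only [show i + 1 - i = 1 by omega, List.replicate_one]
    rw [hdropV]
    rfl

def ublk (t s : ℕ) (rem : List RVT) : List RVT :=
  List.replicate (t + 1 - s) RVT.R ++ rem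

lemma ublk_cons (t s : ℕ) (rem : List RVT) (h : s ≤ t) :
    ublk t s rem = RVT.R :: ublk t (s + 1) rem := by
  unfold ublk
  rw [show t + 1 - s = (t - s) + 1 by omega, List.replicate_succ,
    show t + 1 - (s + 1) = t - s by omega]
  simp

lemma ublk_last (t : ℕ) (rem : List RVT) : ublk t t rem = RVT.R :: rem := by
  unfold ublk
  rw [show t + 1 - t = 1 by omega]
  simp

lemma ublk_head (t s : ℕ) (rem : List RVT) (h : s ≤ t) :
    (ublk t s rem).head? = some RVT.R := by
  unfold ublk
  rw [show t + 1 - s = (t - s) + 1 by omega, List.replicate_succ]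
  simp

lemma lift_ublk (t s : ℕ) (rem : List RVT) (h : s < t) :
    lift (ublk t s rem) = ublk t (s + 1) rem := by
  rw [ublk_cons t s rem (by omega), lift_cons,
    reg_of_head_ne _ (by rw [ublk_head t (s+1) rem (by omega)]; simp)]

lemma Hd_ublk_step (t s : ℕ) (rem : List RVT) (h : s < t) :
    Hd (ublk t s rem) = Hd (ublk t (s + 1) rem) := by
  have h1 : Hd (ublk t s rem) = Hd (lift (ublk t s rem)) := by
    rw [ublk_cons t s rem (by omega)]
    apply Hd_A
    rw [ublk_head t (s+1) rem (by omega)]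
    simp
  rw [h1, lift_ublk t s rem h]

lemma Hd_ublk (t : ℕ) (rem : List RVT) :
    ∀ k s, s + k = t → Hd (ublk t s rem) = Hd (ublk t t rem) := by
  intro k
  induction k with
  | zero => intro s hs; rw [show s = t by omega]
  | succ k ih =>
    intro s hs
    rw [Hd_ublk_step t s rem (by omega)]
    exact ih (s + 1) (by omega)

lemma S2_ublk (t : ℕ) (ys : List RVT) :
    ∀ k s, s + k = t →
      S2 (ublk t s (RVT.V :: ys)) =
        S2 (ublk t t (RVT.V :: ys)) + k * Hd (ublk t t (RVT.V :: ys)) := by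
  intro k
  induction k with
  | zero => intro s hs; rw [show s = t by omega]; simp
  | succ k ih =>
    intro s hs
    have hlt : s < t := by omega
    rw [ublk_cons t s _ (by omega)]
    have hrest2 : 2 ≤ (PC (ublk t (s+1) (RVT.V :: ys))).length := by
      rw [ublk_cons t (s+1) _ (by omega)]
      apply PC_len2
      unfold ublk
      simp
    have hS := S2_A RVT.R (ublk t (s+1) (RVT.V :: ys))
      (by rw [ublk_head t (s+1) _ (by omega)]; simp) hrest2
      (by rw [List.all_eq_false]; exact ⟨RVT.V, by unfold ublk; simp, by simp⟩)
    rw [hS.1, ih (s + 1) (by omega), Hd_ublk t _ k (s+1) (by omega)]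
    ring

lemma iter_ublk (W : List RVT) (i : ℕ) (x0 : RVT) (xs : List RVT)
    (h0 : lift^[i] W = x0 :: RVT.V :: xs) :
    ∀ s, s ≤ countT xs →
      lift^[i + 1 + s] W = ublk (countT xs) s (xs.drop (countT xs)) := by
  intro s
  induction s with
  | zero =>
    intro _
    rw [show i + 1 + 0 = i + 1 from rfl, Function.iterate_succ_apply', h0, lift_cons]
    show RVT.R :: deT xs = _
    rw [deT_eq]
    unfold ublk
    rw [show countT xs + 1 - 0 = countT xs + 1 by omega, List.replicate_succ]
    simp
  | succ s ih =>
    intro hs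
    rw [show i + 1 + (s + 1) = (i + 1 + s) + 1 by omega, Function.iterate_succ_apply',
      ih (by omega), lift_ublk _ _ _ (by omega)]

open scoped Classical in
/-- Proximity formula for multiplicities: with `m_j` the leading entry of
`PC(L^j(W))` (with `W` implicitly padded by trailing `R`'s, whose positions
carry symbol `R`), `p_j` is proximate to `p_i` iff `j = i+1`, or the symbols
of `W` in (1-indexed) positions `i+2, ..., j` form a block `V T^(j−i−2)`.
Then `m_i` is the sum of the `m_j` over all `j` proximate to `i` (all such `j`
lie in `Finset.Icc (i+1) (max (i+1) W.length)`). -/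
theorem statement16 (W : List RVT) (hW : ValidRVT W) (i : ℕ) :
    (PC (lift^[i] W)).headD 1 =
      ∑ j ∈ (Finset.Icc (i + 1) (max (i + 1) W.length)).filter
          (fun j => j = i + 1 ∨
            (i + 2 ≤ j ∧ W.getD (i + 1) RVT.R = RVT.V ∧
              ∀ k ∈ Finset.Icc (i + 3) j, W.getD (k - 1) RVT.R = RVT.T)),
        (PC (lift^[j] W)).headD 1 := by
  have inv := Inv_all W hW i
  by_cases hV : W.getD (i + 1) RVT.R = RVT.V
  · -- case V : a critical block begins at position i+1
    obtain ⟨⟨x0, hshape⟩, hlW⟩ := shape_V W i inv hV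
    set xs := W.drop (i + 2) with hxs
    set t := countT xs with ht
    set rem := xs.drop t with hrem
    have hxslen : xs.length = W.length - (i + 2) := by rw [hxs, List.length_drop]
    have htlen : t ≤ W.length - (i + 2) := by
      rw [ht, ← hxslen]; exact countT_le xs
    have hgetDxs : ∀ k, xs.getD k RVT.R = W.getD (i + 2 + k) RVT.R := by
      intro k; rw [hxs, getD_drop']
    -- identify the filtered set
    have hset : (Finset.Icc (i + 1) (max (i + 1) W.length)).filter
          (fun j => j = i + 1 ∨
            (i + 2 ≤ j ∧ W.getD (i + 1) RVT.R = RVT.V ∧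
              ∀ k ∈ Finset.Icc (i + 3) j, W.getD (k - 1) RVT.R = RVT.T))
        = Finset.Icc (i + 1) (i + 2 + t) := by
      ext j
      simp only [Finset.mem_filter, Finset.mem_Icc]
      constructor
      · rintro ⟨⟨hj1, hj2⟩, hP⟩
        refine ⟨hj1, ?_⟩
        rcases hP with rfl | ⟨hj3, -, hall⟩
        · omega
        · by_contra hcon
          have hk := hall (i + 3 + t) ⟨by omega, by omega⟩
          rw [show i + 3 + t - 1 = i + 2 + t by omega, ← hgetDxs t] at hk
          exact getD_countT xs hk
      · rintro ⟨hj1, hj2⟩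
        have hjN : j ≤ max (i + 1) W.length := by
          have : i + 2 + t ≤ W.length := by omega
          omega
        refine ⟨⟨hj1, hjN⟩, ?_⟩
        rcases Nat.eq_or_lt_of_le hj1 with heq | hlt
        · exact Or.inl heq.symm
        · refine Or.inr ⟨by omega, hV, fun k hk => ?_⟩
          obtain ⟨hk1, hk2⟩ := hk
          rw [show k - 1 = i + 2 + (k - i - 3) by omega, ← hgetDxs]
          exact countT_getD_lt xs (by omega)
    rw [hset]
    -- block structure
    have hiter := iter_ublk W i x0 xs hshape
    have hlift0 : lift (x0 :: RVT.V :: xs) = ublk t 0 rem := by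
      have h01 := hiter 0 (Nat.zero_le _)
      rw [show i + 1 + 0 = i + 1 from rfl, Function.iterate_succ_apply', hshape] at h01
      exact h01
    have hlast : lift^[i + 1 + t] W = ublk t t rem := hiter t le_rfl
    have hnext : lift^[i + 2 + t] W = lift (ublk t t rem) := by
      rw [show i + 2 + t = (i + 1 + t) + 1 by omega, Function.iterate_succ_apply', hlast]
    set h := Hd (ublk t t rem) with hh
    set M := (PC (lift^[i + 2 + t] W)).headD 1 with hM
    -- the constant values on Icc (i+1) (i+1+t)
    have hvals : ∀ j ∈ Finset.Icc (i + 1) (i + 1 + t),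
        (PC (lift^[j] W)).headD 1 = h := by
      intro j hj
      rw [Finset.mem_Icc] at hj
      have hs : j = i + 1 + (j - i - 1) := by omega
      rw [hs, hiter (j - i - 1) (by omega)]
      exact Hd_ublk t rem (t - (j - i - 1)) (j - i - 1) (by omega)
    -- split the sum
    have hsplit : ∑ j ∈ Finset.Icc (i + 1) (i + 2 + t), (PC (lift^[j] W)).headD 1
        = (∑ j ∈ Finset.Icc (i + 1) (i + 1 + t), (PC (lift^[j] W)).headD 1) + M := by
      rw [show i + 2 + t = (i + 1 + t) + 1 by omega]
      rw [Finset.sum_Icc_succ_top (by omega)]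
      rw [hM, show i + 1 + t + 1 = i + 2 + t by omega]
    have hconst : ∑ j ∈ Finset.Icc (i + 1) (i + 1 + t), (PC (lift^[j] W)).headD 1
        = (t + 1) * h := by
      rw [Finset.sum_congr rfl hvals, Finset.sum_const, Nat.card_Icc,
        show i + 1 + t + 1 - (i + 1) = t + 1 by omega, smul_eq_mul]
    rw [hsplit, hconst, hshape]
    -- now split on the symbol after the block
    by_cases hC : ∃ ys, xs.drop (countT xs) = RVT.V :: ys
    · obtain ⟨ys, hys⟩ := hC
      have hCeq := PC_eq_C x0 xs ys hys
      have hremV : rem = RVT.V :: ys := by rw [hrem, ht]; exact hys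
      have hmi : (PC (x0 :: RVT.V :: xs)).headD 1 = S2 (lift (x0 :: RVT.V :: xs)) := by
        rw [hCeq]; rfl
      rw [hmi, hlift0, hremV]
      have hS2 := S2_ublk t ys t 0 (by omega)
      rw [← hremV] at hS2 ⊢
      rw [hS2]
      have hKI : S2 (ublk t t rem) = h + M := by
        rw [ublk_last, hremV]
        rw [ublk_last] at hh
        rw [KI RVT.R ys, hM, hnext, ublk_last, hremV, hh, hremV]
        rfl
      rw [hKI]
      ring
    · have hne : (xs.drop (countT xs)).head? ≠ some RVT.V := by
        intro hcon
        cases hd : xs.drop (countT xs) with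
        | nil => rw [hd] at hcon; simp at hcon
        | cons z zs =>
          rw [hd] at hcon
          simp at hcon
          exact hC ⟨zs, by rw [hd, hcon]⟩
      have hBeq := PC_eq_B x0 xs hne
      have hmi : (PC (x0 :: RVT.V :: xs)).headD 1
          = (countT xs + 2) * (PC (lift (x0 :: RVT.V :: xs))).headD 1 := by
        rw [hBeq]; rfl
      have hMh : M = h := by
        rw [hM, hnext, hh, ublk_last]
        have hrne : rem.head? ≠ some RVT.V := by rw [hrem, ht]; exact hne
        exact (Hd_A RVT.R rem hrne).symm
      rw [hmi, hlift0]
      have : (PC (ublk t 0 rem)).headD 1 = h := Hd_ublk t rem t 0 (by omega)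
      rw [show (PC (ublk t 0 rem)).headD 1 = Hd (ublk t 0 rem) from rfl] at this
      rw [show (PC (ublk t 0 rem)).headD 1 = Hd (ublk t 0 rem) from rfl, this, hMh, ← ht]
      ring
  · -- case not V : only j = i+1 is proximate
    have hset : (Finset.Icc (i + 1) (max (i + 1) W.length)).filter
          (fun j => j = i + 1 ∨
            (i + 2 ≤ j ∧ W.getD (i + 1) RVT.R = RVT.V ∧
              ∀ k ∈ Finset.Icc (i + 3) j, W.getD (k - 1) RVT.R = RVT.T))
        = {i + 1} := by
      ext j
      simp only [Finset.mem_filter, Finset.mem_Icc, Finset.mem_singleton]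
      constructor
      · rintro ⟨-, rfl | ⟨-, hVeq, -⟩⟩
        · rfl
        · exact absurd hVeq hV
      · rintro rfl
        exact ⟨⟨le_rfl, le_max_left _ _⟩, Or.inl rfl⟩
    rw [hset, Finset.sum_singleton]
    exact step_ne W i inv hV
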